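/- arXiv:2506.09647 — 2 statements merged into one kernel-verified Lean document; each statement's English description precedes it below -/
import Mathlib

section
/- Multiplication by an orthogonal tensor preserves the Frobenius norm: if U is orthogonal under the t-product, then ‖U * T‖_F = ‖T‖_F for any compatible tensor T. -/
open Finset Complex

noncomputable section

/-- Circular convolution of two length-`n` tubes. -/
def cconv {R : Type*} [CommRing R] {n : ℕ} [NeZero n] (a b : ZMod n → R) : ZMod n → R :=
  fun k => ∑ j : ZMod n, a j * b (k - j)

/-- t-product of two third-order tensors (tubes indexed by `ZMod n3`). -/
def tProd3 {R : Type*} [CommRing R] {n1 n2 n4 n3 : ℕ} [NeZero n3]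
    (A : Fin n1 → Fin n2 → ZMod n3 → R) (B : Fin n2 → Fin n4 → ZMod n3 → R) :
    Fin n1 → Fin n4 → ZMod n3 → R :=
  fun i j k => ∑ l : Fin n2, cconv (A i l) (B l j) k

/-- Tensor transpose: transpose each frontal slice and reverse slices 2..n3
(with tubes indexed by `ZMod n3`, slice `k` goes to slice `-k`). -/
def ttrans {R : Type*} {n1 n2 n3 : ℕ} (A : Fin n1 → Fin n2 → ZMod n3 → R) :
    Fin n2 → Fin n1 → ZMod n3 → R :=
  fun j i k => A i j (-k)

/-- Identity tensor: first frontal slice the identity, all other slices zero. -/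
def tid {n n3 : ℕ} : Fin n → Fin n → ZMod n3 → ℝ :=
  fun i j k => if i = j ∧ k = 0 then 1 else 0

/-- A tensor is orthogonal if `Uᵀ * U = U * Uᵀ = I` under the t-product. -/
def IsOrthT {n n3 : ℕ} [NeZero n3] (U : Fin n → Fin n → ZMod n3 → ℝ) : Prop :=
  tProd3 (ttrans U) U = tid ∧ tProd3 U (ttrans U) = tid

lemma sum_swap4 {n n3 : ℕ} [NeZero n3]
    (f : Fin n → ZMod n3 → (Fin n × ZMod n3) → (Fin n × ZMod n3) → ℝ) :
    ∑ i : Fin n, ∑ k : ZMod n3, ∑ lm : Fin n × ZMod n3, ∑ lm' : Fin n × ZMod n3, f i k lm lm'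
    = ∑ lm : Fin n × ZMod n3, ∑ lm' : Fin n × ZMod n3, ∑ i : Fin n, ∑ k : ZMod n3, f i k lm lm' := by
  trans (∑ i : Fin n, ∑ lm : Fin n × ZMod n3, ∑ k : ZMod n3, ∑ lm' : Fin n × ZMod n3, f i k lm lm')
  · exact Finset.sum_congr rfl fun i _ => Finset.sum_comm
  trans (∑ lm : Fin n × ZMod n3, ∑ i : Fin n, ∑ k : ZMod n3, ∑ lm' : Fin n × ZMod n3, f i k lm lm')
  · exact Finset.sum_comm
  refine Finset.sum_congr rfl fun lm _ => ?_
  trans (∑ i : Fin n, ∑ lm' : Fin n × ZMod n3, ∑ k : ZMod n3, f i k lm lm')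
  · exact Finset.sum_congr rfl fun i _ => Finset.sum_comm
  exact Finset.sum_comm

lemma key {n n2 n3 : ℕ} [NeZero n3] (U : Fin n → Fin n → ZMod n3 → ℝ)
    (hU : tProd3 (ttrans U) U = tid) (T : Fin n → Fin n2 → ZMod n3 → ℝ) (j : Fin n2) :
    ∑ i : Fin n, ∑ k : ZMod n3, (tProd3 U T i j k)^2
      = ∑ l : Fin n, ∑ k : ZMod n3, (T l j k)^2 := by
  have hUe : ∀ (l l' : Fin n) (p : ZMod n3),
      ∑ m : ZMod n3, ∑ i : Fin n, U i l m * U i l' (m + p) = tid l l' p := by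
    intro l l' p
    have h := congrFun (congrFun (congrFun hU l) l') p
    simp only [tProd3, cconv, ttrans] at h
    rw [← h, Finset.sum_comm]
    refine Finset.sum_congr rfl fun i _ => ?_
    refine Fintype.sum_equiv (Equiv.neg _) _ _ fun m => ?_
    simp [sub_neg_eq_add, add_comm]
  have expand : ∀ i k, (tProd3 U T i j k)^2 =
      ∑ lm : Fin n × ZMod n3, ∑ lm' : Fin n × ZMod n3,
        (U i lm.1 lm.2 * T lm.1 j (k - lm.2)) * (U i lm'.1 lm'.2 * T lm'.1 j (k - lm'.2)) := by
    intro i k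
    rw [sq, ← Finset.sum_mul_sum]
    congr 1 <;>
    · simp only [tProd3, cconv, Fintype.sum_prod_type]
  calc ∑ i : Fin n, ∑ k : ZMod n3, (tProd3 U T i j k)^2
      = ∑ lm : Fin n × ZMod n3, ∑ lm' : Fin n × ZMod n3,
          (∑ i : Fin n, U i lm.1 lm.2 * U i lm'.1 lm'.2) *
          (∑ k : ZMod n3, T lm.1 j (k - lm.2) * T lm'.1 j (k - lm'.2)) := by
        simp only [expand]
        rw [sum_swap4]
        refine Finset.sum_congr rfl fun lm _ => Finset.sum_congr rfl fun lm' _ => ?_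
        rw [Finset.sum_mul_sum]
        refine Finset.sum_congr rfl fun i _ => Finset.sum_congr rfl fun k _ => ?_
        ring
    _ = ∑ lm : Fin n × ZMod n3, ∑ lm' : Fin n × ZMod n3,
          (∑ i : Fin n, U i lm.1 lm.2 * U i lm'.1 lm'.2) *
          (∑ k : ZMod n3, T lm.1 j k * T lm'.1 j (k - (lm'.2 - lm.2))) := by
        refine Finset.sum_congr rfl fun lm _ => Finset.sum_congr rfl fun lm' _ => ?_
        congr 1
        refine Fintype.sum_equiv (Equiv.subRight lm.2) _ _ fun k => ?_
        simp only [Equiv.subRight_apply]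
        rw [show k - lm'.2 = (k - lm.2) - (lm'.2 - lm.2) from by ring]
    _ = ∑ l : Fin n, ∑ m : ZMod n3, ∑ l' : Fin n, ∑ p : ZMod n3,
          (∑ i : Fin n, U i l m * U i l' (m + p)) *
          (∑ k : ZMod n3, T l j k * T l' j (k - p)) := by
        rw [Fintype.sum_prod_type]
        refine Finset.sum_congr rfl fun l _ => Finset.sum_congr rfl fun m _ => ?_
        rw [Fintype.sum_prod_type]
        refine Finset.sum_congr rfl fun l' _ => ?_
        refine Fintype.sum_equiv (Equiv.subRight m) _ _ fun q => ?_
        simp only [Equiv.subRight_apply]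
        rw [show m + (q - m) = q from by ring]
    _ = ∑ l : Fin n, ∑ l' : Fin n, ∑ p : ZMod n3,
          tid l l' p * (∑ k : ZMod n3, T l j k * T l' j (k - p)) := by
        refine Finset.sum_congr rfl fun l _ => ?_
        rw [Finset.sum_comm]
        refine Finset.sum_congr rfl fun l' _ => ?_
        rw [Finset.sum_comm]
        refine Finset.sum_congr rfl fun p _ => ?_
        rw [← hUe l l' p, Finset.sum_mul]
    _ = ∑ l : Fin n, ∑ k : ZMod n3, (T l j k)^2 := by
        refine Finset.sum_congr rfl fun l _ => ?_
        rw [Finset.sum_eq_single l]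
        · rw [Finset.sum_eq_single (0 : ZMod n3)]
          · simp [tid, sq]
          · intro p _ hp; simp [tid, hp]
          · simp
        · intro l' _ hl'; simp [tid, Ne.symm hl']
        · simp

/-- t-product multiplication by an orthogonal tensor preserves the
Frobenius norm. -/
theorem orth_tprod_fro {n n2 n3 : ℕ} [NeZero n3]
    (U : Fin n → Fin n → ZMod n3 → ℝ) (hU : IsOrthT U)
    (T : Fin n → Fin n2 → ZMod n3 → ℝ) :
    Real.sqrt (∑ i : Fin n, ∑ j : Fin n2, ∑ k : ZMod n3, (tProd3 U T i j k) ^ 2) =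
      Real.sqrt (∑ i : Fin n, ∑ j : Fin n2, ∑ k : ZMod n3, (T i j k) ^ 2) := by
  congr 1
  calc ∑ i : Fin n, ∑ j : Fin n2, ∑ k : ZMod n3, (tProd3 U T i j k) ^ 2
      = ∑ j : Fin n2, ∑ i : Fin n, ∑ k : ZMod n3, (tProd3 U T i j k) ^ 2 := Finset.sum_comm
    _ = ∑ j : Fin n2, ∑ i : Fin n, ∑ k : ZMod n3, (T i j k) ^ 2 :=
        Finset.sum_congr rfl fun j _ => key U hU.1 T j
    _ = ∑ i : Fin n, ∑ j : Fin n2, ∑ k : ZMod n3, (T i j k) ^ 2 := Finset.sum_comm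
end
end

section
/- Every third-order tensor T ∈ ℝ^{n1×n2×n3} admits a t-SVD: there exist orthogonal tensors U ∈ ℝ^{n1×n1×n3} and V ∈ ℝ^{n2×n2×n3} and an f-diagonal tensor S ∈ ℝ^{n1×n2×n3} such that T = U * S * Vᵀ. -/
open Finset Complex

noncomputable section

/-- f-diagonal tensor: every frontal slice is a diagonal matrix. -/
def fDiag {R : Type*} [Zero R] {n1 n2 n3 : ℕ} (S : Fin n1 → Fin n2 → ZMod n3 → R) : Prop :=
  ∀ (i : Fin n1) (j : Fin n2) (k : ZMod n3), (i : ℕ) ≠ (j : ℕ) → S i j k = 0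

open Matrix
open scoped ComplexOrder
open scoped ComplexConjugate

theorem svd_exists'' {𝕜 : Type*} [RCLike 𝕜] {m n : ℕ} (A : Matrix (Fin m) (Fin n) 𝕜) :
    ∃ (U : Matrix (Fin m) (Fin m) 𝕜) (S : Matrix (Fin m) (Fin n) 𝕜)
      (V : Matrix (Fin n) (Fin n) 𝕜),
      Uᴴ * U = 1 ∧ U * Uᴴ = 1 ∧ Vᴴ * V = 1 ∧ V * Vᴴ = 1 ∧
      (∀ (i : Fin m) (j : Fin n), (i : ℕ) ≠ (j : ℕ) → S i j = 0) ∧ A = U * S * Vᴴ := by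
  classical
  have hH : (Aᴴ * A).IsHermitian := (posSemidef_conjTranspose_mul_self A).isHermitian
  have hPSD : (Aᴴ * A).PosSemidef := posSemidef_conjTranspose_mul_self A
  set d : Fin n → ℝ := hH.eigenvalues with hd
  have hdnn : ∀ j, 0 ≤ d j := fun j => hPSD.eigenvalues_nonneg j
  set π : Equiv.Perm (Fin n) := Tuple.sort (fun j => if d j = 0 then (1:ℕ) else 0) with hπ
  have hmono : Monotone ((fun j => if d j = 0 then (1:ℕ) else 0) ∘ π) := Tuple.monotone_sort _
  -- downward closure of the nonzero set
  have hdc : ∀ i j : Fin n, i ≤ j → d (π j) ≠ 0 → d (π i) ≠ 0 := by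
    intro i j hij hj
    have h2 := hmono hij
    simp only [Function.comp_apply, if_neg hj] at h2
    intro h
    simp [h] at h2
  set V₀ : Matrix (Fin n) (Fin n) 𝕜 := (hH.eigenvectorUnitary : Matrix (Fin n) (Fin n) 𝕜) with hV₀
  have hV₀u : V₀ᴴ * V₀ = 1 := by
    simpa [hV₀, star_eq_conjTranspose] using
      (Matrix.mem_unitaryGroup_iff').mp hH.eigenvectorUnitary.2
  have hV₀u' : V₀ * V₀ᴴ = 1 := mul_eq_one_comm.mp hV₀u
  have hspec : Aᴴ * A = V₀ * Matrix.diagonal (RCLike.ofReal ∘ d) * V₀ᴴ := by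
    simpa [hV₀, star_eq_conjTranspose] using hH.spectral_theorem
  set V : Matrix (Fin n) (Fin n) 𝕜 := V₀.submatrix id π with hV
  have hVc : Vᴴ = V₀ᴴ.submatrix π id := by
    rw [hV, conjTranspose_submatrix]
  have hVu : Vᴴ * V = 1 := by
    rw [hVc, hV]
    have : V₀ᴴ.submatrix (π : Fin n → Fin n) id * V₀.submatrix id (π : Fin n → Fin n)
        = (V₀ᴴ * V₀).submatrix π π := by
      rw [← Matrix.submatrix_mul _ _ _ _ _ Function.bijective_id]
    rw [this, hV₀u, Matrix.submatrix_one_equiv]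
  have hVu' : V * Vᴴ = 1 := mul_eq_one_comm.mp hVu
  set B : Matrix (Fin m) (Fin n) 𝕜 := A * V with hB
  have hBB : Bᴴ * B = Matrix.diagonal (fun j => (RCLike.ofReal (d (π j)) : 𝕜)) := by
    rw [hB, conjTranspose_mul, Matrix.mul_assoc, ← Matrix.mul_assoc Aᴴ A V, hspec]
    rw [hVc, hV]
    have key : ∀ D : Matrix (Fin n) (Fin n) 𝕜, V₀ᴴ * (V₀ * D * V₀ᴴ * V₀) = D := by
      intro D
      simp only [Matrix.mul_assoc, hV₀u, Matrix.mul_one]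
      rw [← Matrix.mul_assoc, hV₀u, Matrix.one_mul]
    have e1 : V₀ᴴ.submatrix (⇑π) id * (V₀ * Matrix.diagonal (RCLike.ofReal ∘ d)
        * V₀ᴴ * V₀.submatrix id (⇑π))
        = (V₀ᴴ * (V₀ * Matrix.diagonal (RCLike.ofReal ∘ d) * V₀ᴴ * V₀)).submatrix ⇑π ⇑π := by
      ext i j
      simp [Matrix.mul_apply, Matrix.submatrix_apply, Finset.mul_sum, Finset.sum_mul,
        mul_assoc]
    rw [show V₀ * Matrix.diagonal (RCLike.ofReal ∘ d) * V₀ᴴ * V₀.submatrix id ⇑π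
        = V₀ * Matrix.diagonal (RCLike.ofReal ∘ d) * V₀ᴴ * V₀.submatrix id ⇑π from rfl] at e1 ⊢
    rw [← Matrix.mul_assoc, ← Matrix.mul_assoc] at e1
    rw [← Matrix.mul_assoc, ← Matrix.mul_assoc, e1, key, Matrix.submatrix_diagonal_equiv]
    rfl
  have hcol : ∀ j k : Fin n, (∑ x, star (B x j) * B x k)
      = if j = k then (RCLike.ofReal (d (π j)) : 𝕜) else 0 := by
    intro j k
    have : (Bᴴ * B) j k = ∑ x, star (B x j) * B x k := by
      simp [Matrix.mul_apply, Matrix.conjTranspose_apply]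
    rw [← this, hBB, Matrix.diagonal_apply]
  set σ : Fin n → ℝ := fun j => Real.sqrt (d (π j)) with hσ
  have hσsq : ∀ j, (σ j) * (σ j) = d (π j) := fun j => Real.mul_self_sqrt (hdnn (π j))
  have hσ0 : ∀ j, d (π j) ≠ 0 → σ j ≠ 0 := by
    intro j hj h
    exact hj (by rw [← hσsq j, h, mul_zero])
  -- columns with zero singular value vanish
  have hcol0 : ∀ j : Fin n, d (π j) = 0 → ∀ x, B x j = 0 := by
    intro j hj x
    have h1 := hcol j j
    rw [if_pos rfl, hj, RCLike.ofReal_zero] at h1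
    have h2 : ∑ x, (‖B x j‖ : ℝ) ^ 2 = 0 := by
      have h1' : ∑ x, ((‖B x j‖ : 𝕜)) ^ 2 = 0 := by
        rw [← h1]
        exact Finset.sum_congr rfl fun x _ => (RCLike.conj_mul _).symm
      have h4 := congrArg RCLike.re h1'
      rw [map_sum] at h4
      simp only [← RCLike.ofReal_pow, RCLike.ofReal_re] at h4
      simpa using h4
    have h3 : ∀ x ∈ Finset.univ, (‖B x j‖ : ℝ) ^ 2 = 0 := by
      intro x _
      have := (Finset.sum_eq_zero_iff_of_nonneg (fun x _ => sq_nonneg ‖B x j‖)).mp h2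
      exact this x (Finset.mem_univ x)
    have := h3 x (Finset.mem_univ x)
    simpa using this
  -- normalized columns
  set uvec : Fin n → EuclideanSpace 𝕜 (Fin m) := fun j => WithLp.toLp 2 ((σ j : 𝕜)⁻¹ • fun x => B x j) with hu
  have hinner_eq : ∀ j k : Fin n, (inner 𝕜 (uvec j) (uvec k) : 𝕜)
      = ((σ j : 𝕜))⁻¹ * (((σ k : 𝕜))⁻¹ * (if j = k then (RCLike.ofReal (d (π j)) : 𝕜) else 0)) := by
    intro j k
    rw [← hcol j k]
    simp only [hu, PiLp.inner_apply, PiLp.toLp_apply, RCLike.inner_apply, Pi.smul_apply, smul_eq_mul, _root_.map_mul,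
      map_inv₀, RCLike.conj_ofReal, Finset.mul_sum, starRingEnd_apply]
    refine Finset.sum_congr rfl fun x _ => ?_
    rw [show star ((σ j : 𝕜)) = (σ j : 𝕜) from by
      rw [RCLike.star_def, RCLike.conj_ofReal]]
    ring
  have huinner : ∀ j k : Fin n, d (π j) ≠ 0 → d (π k) ≠ 0 →
      (inner 𝕜 (uvec j) (uvec k) : 𝕜) = if j = k then 1 else 0 := by
    intro j k hj hk
    rw [hinner_eq]
    by_cases hjk : j = k
    · subst hjk
      rw [if_pos rfl, if_pos rfl, ← hσsq j]
      have h0 : (σ j : 𝕜) ≠ 0 := by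
        exact RCLike.ofReal_ne_zero.mpr (hσ0 j hj)
      push_cast
      field_simp
    · rw [if_neg hjk, if_neg hjk, mul_zero, mul_zero]
  have hOn : Orthonormal 𝕜 (fun j : {j : Fin n // d (π j) ≠ 0} => uvec j.1) := by
    rw [orthonormal_iff_ite]
    intro j k
    rw [huinner _ _ j.2 k.2]
    simp [Subtype.ext_iff]
  have hcard : Fintype.card {j : Fin n // d (π j) ≠ 0} ≤ m := by
    have h5 := hOn.linearIndependent.fintype_card_le_finrank
    simpa [finrank_euclideanSpace_fin] using h5
  have hvallt : ∀ j : Fin n, d (π j) ≠ 0 → (j : ℕ) < m := by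
    intro j hj
    have hsub : Finset.Iic j ⊆ Finset.univ.filter (fun i => d (π i) ≠ 0) := by
      intro i hi
      simp only [Finset.mem_Iic] at hi
      simp [Finset.mem_filter, hdc i j hi hj]
    have h6 : (j : ℕ) + 1 ≤ (Finset.univ.filter (fun i => d (π i) ≠ 0)).card := by
      simpa [Fin.card_Iic] using Finset.card_le_card hsub
    have h7 : (Finset.univ.filter (fun i => d (π i) ≠ 0)).card
        = Fintype.card {j : Fin n // d (π j) ≠ 0} := (Fintype.card_subtype _).symm
    omega
  -- the candidate partial family on `Fin m`
  set s' : Set (Fin m) := {i | ∃ hn : (i : ℕ) < n, d (π ⟨(i : ℕ), hn⟩) ≠ 0} with hs'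
  set v : Fin m → EuclideanSpace 𝕜 (Fin m) := fun i =>
    if h : ∃ hn : (i : ℕ) < n, d (π ⟨(i : ℕ), hn⟩) ≠ 0 then uvec ⟨(i : ℕ), h.choose⟩ else 0
    with hv
  have hrestrict : Orthonormal 𝕜 (s'.restrict v) := by
    rw [orthonormal_iff_ite]
    rintro ⟨i, hi⟩ ⟨k, hk⟩
    have hi' : ∃ hn : (i : ℕ) < n, d (π ⟨(i : ℕ), hn⟩) ≠ 0 := hi
    have hk' : ∃ hn : (k : ℕ) < n, d (π ⟨(k : ℕ), hn⟩) ≠ 0 := hk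
    simp only [Set.restrict_apply, Set.restrict, hv, dif_pos hi', dif_pos hk']
    rw [huinner _ _ hi'.choose_spec hk'.choose_spec]
    congr 1
    simp only [eq_iff_iff]
    constructor
    · intro h
      have := congrArg Fin.val h
      simp only at this
      exact Subtype.ext (Fin.ext this)
    · intro h
      have : (i : ℕ) = (k : ℕ) := congrArg Fin.val (congrArg Subtype.val h)
      exact Fin.ext this
  obtain ⟨b, hb⟩ := hrestrict.exists_orthonormalBasis_extension_of_card_eq
    (by simp [finrank_euclideanSpace_fin])
  set U : Matrix (Fin m) (Fin m) 𝕜 := Matrix.of fun x i => b i x with hU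
  have hUinner : ∀ i j : Fin m, ∑ x, star (b i x) * b j x = if i = j then (1 : 𝕜) else 0 := by
    intro i j
    rw [← orthonormal_iff_ite.mp b.orthonormal i j]
    simp only [PiLp.inner_apply, RCLike.inner_apply, starRingEnd_apply]
    exact Finset.sum_congr rfl fun x _ => mul_comm _ _
  have hUu : Uᴴ * U = 1 := by
    ext i j
    simp only [Matrix.mul_apply, Matrix.conjTranspose_apply, hU, Matrix.of_apply,
      Matrix.one_apply]
    exact hUinner i j
  have hUu' : U * Uᴴ = 1 := mul_eq_one_comm.mp hUu
  set S : Matrix (Fin m) (Fin n) 𝕜 :=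
    Matrix.of fun i j => if (i : ℕ) = (j : ℕ) then ((σ j : ℝ) : 𝕜) else 0 with hS
  have hAV : A * V = U * S := by
    ext x j
    by_cases hjm : (j : ℕ) < m
    · set i₀ : Fin m := ⟨(j : ℕ), hjm⟩ with hi₀
      have hsum : (U * S) x j = b i₀ x * (σ j : 𝕜) := by
        rw [Matrix.mul_apply, Finset.sum_eq_single i₀]
        · simp only [hU, hS, Matrix.of_apply, hi₀, Fin.val_mk, if_true, eq_self_iff_true]
        · intro i _ hii
          have : (i : ℕ) ≠ (j : ℕ) := by
            intro h
            exact hii (Fin.ext (by simp [hi₀, h]))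
          simp [hS, this]
        · intro h
          exact absurd (Finset.mem_univ i₀) h
      by_cases hdj : d (π j) = 0
      · have hσj : σ j = 0 := by simp [hσ, hdj]
        have : (A * V) x j = B x j := by rw [← hB]
        rw [this, hcol0 j hdj x, hsum, hσj]
        simp
      · have hmem : i₀ ∈ s' := by
          refine ⟨j.2, ?_⟩
          have : (⟨((i₀ : ℕ)), j.2⟩ : Fin n) = j := Fin.ext rfl
          rw [this]
          exact hdj
        have hbv := hb i₀ hmem
        have hex : ∃ hn : ((i₀ : ℕ)) < n, d (π ⟨((i₀ : ℕ)), hn⟩) ≠ 0 := hmem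
        have hchoose : (⟨((i₀ : ℕ)), hex.choose⟩ : Fin n) = j := Fin.ext rfl
        have hbu : b i₀ = uvec j := by
          rw [hbv]
          simp only [hv, dif_pos hex, hchoose]
        have hσj : (σ j : 𝕜) ≠ 0 := by
          exact RCLike.ofReal_ne_zero.mpr (hσ0 j hdj)
        have : (A * V) x j = B x j := by rw [← hB]
        rw [this, hsum, hbu]
        simp only [hu, PiLp.toLp_apply, Pi.smul_apply, smul_eq_mul]
        field_simp
      -- done
    · have hdj : d (π j) = 0 := by
        by_contra h
        exact hjm (hvallt j h)
      have hL : (A * V) x j = 0 := by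
        have : (A * V) x j = B x j := by rw [← hB]
        rw [this, hcol0 j hdj x]
      have hR : (U * S) x j = 0 := by
        rw [Matrix.mul_apply]
        refine Finset.sum_eq_zero fun i _ => ?_
        have : (i : ℕ) ≠ (j : ℕ) := by
          have := i.2
          omega
        simp [hS, this]
      rw [hL, hR]
  refine ⟨U, S, V, hUu, hUu', hVu, hVu', ?_, ?_⟩
  · intro i j hij
    simp [hS, hij]
  · calc A = A * (V * Vᴴ) := by rw [hVu', Matrix.mul_one]
    _ = (A * V) * Vᴴ := by rw [Matrix.mul_assoc]
    _ = U * S * Vᴴ := by rw [hAV]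

/-- entrywise conjugate -/
def mconj {a b : Type*} (M : Matrix a b ℂ) : Matrix a b ℂ := M.map (starRingEnd ℂ)

lemma mconj_mul {a b c : Type*} [Fintype b] (M : Matrix a b ℂ) (N : Matrix b c ℂ) :
    mconj (M * N) = mconj M * mconj N := Matrix.map_mul

lemma mconj_conjT {a b : Type*} (M : Matrix a b ℂ) : mconj (Mᴴ) = (mconj M)ᴴ := by
  ext i j; simp [mconj]

lemma mconj_one {n : ℕ} : mconj (1 : Matrix (Fin n) (Fin n) ℂ) = 1 := by
  ext i j; by_cases h : i = j <;> simp [mconj, Matrix.one_apply, h]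

lemma mconj_mconj {a b : Type*} (M : Matrix a b ℂ) : mconj (mconj M) = M := by
  ext i j; simp [mconj]

lemma mconj_map_ofReal {a b : Type*} (M : Matrix a b ℝ) :
    mconj (M.map (Complex.ofReal)) = M.map (Complex.ofReal) := by
  ext i j; simp [mconj]

abbrev SVDTriple (m n : ℕ) :=
  Matrix (Fin m) (Fin m) ℂ × Matrix (Fin m) (Fin n) ℂ × Matrix (Fin n) (Fin n) ℂ

def GoodSVD {m n : ℕ} (M : Matrix (Fin m) (Fin n) ℂ) (t : SVDTriple m n) : Prop :=
  t.1ᴴ * t.1 = 1 ∧ t.1 * t.1ᴴ = 1 ∧ t.2.2ᴴ * t.2.2 = 1 ∧ t.2.2 * t.2.2ᴴ = 1 ∧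
  (∀ (i : Fin m) (j : Fin n), (i : ℕ) ≠ (j : ℕ) → t.2.1 i j = 0) ∧ M = t.1 * t.2.1 * t.2.2ᴴ

def mconjT {m n : ℕ} (t : SVDTriple m n) : SVDTriple m n :=
  (mconj t.1, mconj t.2.1, mconj t.2.2)

lemma GoodSVD.mconj {m n : ℕ} {M : Matrix (Fin m) (Fin n) ℂ} {t : SVDTriple m n}
    (h : GoodSVD M t) : GoodSVD (mconj M) (mconjT t) := by
  obtain ⟨h1, h2, h3, h4, h5, h6⟩ := h
  refine ⟨?_, ?_, ?_, ?_, ?_, ?_⟩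
  · rw [mconjT, ← mconj_conjT, ← mconj_mul, h1, mconj_one]
  · rw [mconjT, ← mconj_conjT, ← mconj_mul, h2, mconj_one]
  · rw [mconjT, ← mconj_conjT, ← mconj_mul, h3, mconj_one]
  · rw [mconjT, ← mconj_conjT, ← mconj_mul, h4, mconj_one]
  · intro i j hij; simp [mconjT, _root_.mconj, h5 i j hij]
  · rw [mconjT, ← mconj_conjT, ← mconj_mul, ← mconj_mul, h6]

/-- complex choice -/
def cch {m n : ℕ} (M : Matrix (Fin m) (Fin n) ℂ) : SVDTriple m n :=
  ⟨(svd_exists'' M).choose, (svd_exists'' M).choose_spec.choose,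
    (svd_exists'' M).choose_spec.choose_spec.choose⟩

lemma cch_spec {m n : ℕ} (M : Matrix (Fin m) (Fin n) ℂ) : GoodSVD M (cch M) := by
  obtain ⟨h1, h2, h3, h4, h5, h6⟩ := (svd_exists'' M).choose_spec.choose_spec.choose_spec
  exact ⟨h1, h2, h3, h4, h5, h6⟩

/-- real choice: real SVD of the real part, complexified -/
def rch {m n : ℕ} (M : Matrix (Fin m) (Fin n) ℂ) : SVDTriple m n :=
  ⟨((svd_exists'' (M.map Complex.re)).choose).map Complex.ofReal,
   ((svd_exists'' (M.map Complex.re)).choose_spec.choose).map Complex.ofReal,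
   ((svd_exists'' (M.map Complex.re)).choose_spec.choose_spec.choose).map Complex.ofReal⟩

lemma rch_real {m n : ℕ} (M : Matrix (Fin m) (Fin n) ℂ) : mconjT (rch M) = rch M := by
  simp only [mconjT, rch, mconj_map_ofReal]

lemma map_ofReal_conjT {a b : ℕ} (M : Matrix (Fin a) (Fin b) ℝ) :
    (M.map Complex.ofReal)ᴴ = (Mᴴ).map Complex.ofReal := by
  ext i j; simp [Matrix.conjTranspose_apply]

lemma rch_spec {m n : ℕ} (M : Matrix (Fin m) (Fin n) ℂ) (hM : mconj M = M) :
    GoodSVD M (rch M) := by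
  obtain ⟨h1, h2, h3, h4, h5, h6⟩ :=
    (svd_exists'' (M.map Complex.re)).choose_spec.choose_spec.choose_spec
  have hMre : (M.map Complex.re).map Complex.ofReal = M := by
    ext i j
    simp only [Matrix.map_apply]
    have h0 : (starRingEnd ℂ) (M i j) = M i j := by
      have := congrArg (fun X => X i j) hM
      simpa [_root_.mconj] using this
    exact Complex.conj_eq_iff_re.mp h0
  have hmul : ∀ {a b c : ℕ} (X : Matrix (Fin a) (Fin b) ℝ) (Y : Matrix (Fin b) (Fin c) ℝ),
      (X * Y).map Complex.ofReal = X.map Complex.ofReal * Y.map Complex.ofReal :=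
    fun X Y => Matrix.map_mul (f := Complex.ofRealHom)
  have hone : ∀ {a : ℕ}, ((1 : Matrix (Fin a) (Fin a) ℝ)).map Complex.ofReal = 1 := by
    intro a; ext i j; by_cases h : i = j <;> simp [Matrix.one_apply, h]
  refine ⟨?_, ?_, ?_, ?_, ?_, ?_⟩
  · rw [rch]; dsimp only; rw [map_ofReal_conjT, ← hmul, h1, hone]
  · rw [rch]; dsimp only; rw [map_ofReal_conjT, ← hmul, h2, hone]
  · rw [rch]; dsimp only; rw [map_ofReal_conjT, ← hmul, h3, hone]
  · rw [rch]; dsimp only; rw [map_ofReal_conjT, ← hmul, h4, hone]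
  · intro i j hij; simp only [rch, Matrix.map_apply, h5 i j hij, Complex.ofReal_zero]
  · conv_lhs => rw [← hMre]
    rw [rch]; dsimp only
    rw [map_ofReal_conjT, ← hmul, ← hmul]
    exact congrArg (fun X => Matrix.map X Complex.ofReal) h6

lemma family_svd {N m n : ℕ} [NeZero N] (M : ZMod N → Matrix (Fin m) (Fin n) ℂ)
    (hsym : ∀ l, M (-l) = mconj (M l)) :
    ∃ t : ZMod N → SVDTriple m n,
      (∀ l, GoodSVD (M l) (t l)) ∧ (∀ l, t (-l) = mconjT (t l)) := by
  classical
  set t : ZMod N → SVDTriple m n := fun l =>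
    if -l = l then rch (M l)
    else if l.val < (-l).val then cch (M l)
    else mconjT (cch (M (-l))) with ht
  have hval : ∀ l : ZMod N, ¬(-l = l) → l.val ≠ (-l).val := by
    intro l h he
    exact h (ZMod.val_injective N he).symm
  refine ⟨t, ?_, ?_⟩
  · intro l
    by_cases h1 : -l = l
    · have hl : t l = rch (M l) := by rw [ht]; dsimp only; rw [if_pos h1]
      rw [hl]
      refine rch_spec (M l) ?_
      have h3 := hsym l
      rw [h1] at h3
      exact h3.symm
    · by_cases h2 : l.val < (-l).val
      · have hl : t l = cch (M l) := by rw [ht]; dsimp only; rw [if_neg h1, if_pos h2]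
        rw [hl]; exact cch_spec (M l)
      · have hl : t l = mconjT (cch (M (-l))) := by
          rw [ht]; dsimp only; rw [if_neg h1, if_neg h2]
        rw [hl]
        have hgs := (cch_spec (M (-l))).mconj
        have e : mconj (M (-l)) = M l := by rw [hsym l, mconj_mconj]
        rwa [e] at hgs
  · intro l
    by_cases h1 : -l = l
    · have hl : t l = rch (M l) := by rw [ht]; dsimp only; rw [if_pos h1]
      rw [h1, hl]
      exact (rch_real (M l)).symm
    · have h1' : ¬(-(-l) = -l) := by rw [neg_neg]; intro h; exact h1 h.symm
      by_cases h2 : l.val < (-l).val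
      · have h2' : ¬((-l).val < (-(-l)).val) := by rw [neg_neg]; omega
        have hta : t (-l) = mconjT (cch (M (-(-l)))) := by
          rw [ht]; dsimp only; rw [if_neg h1', if_neg h2']
        have htb : t l = cch (M l) := by rw [ht]; dsimp only; rw [if_neg h1, if_pos h2]
        rw [hta, htb, neg_neg]
      · have h2' : (-l).val < (-(-l)).val := by
          rw [neg_neg]
          have := hval l h1
          omega
        have hta : t (-l) = cch (M (-l)) := by
          rw [ht]; dsimp only; rw [if_neg h1', if_pos h2']
        have htb : t l = mconjT (cch (M (-l))) := by
          rw [ht]; dsimp only; rw [if_neg h1, if_neg h2]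
        rw [hta, htb, mconjT, mconjT]
        simp only [mconj_mconj]

section DFT

variable {N : ℕ} [NeZero N]

lemma conj_stdAddChar (x : ZMod N) :
    (starRingEnd ℂ) (ZMod.stdAddChar x) = ZMod.stdAddChar (-x) := by
  have h1 : ZMod.stdAddChar x * ZMod.stdAddChar (-x) = 1 := by
    rw [← AddChar.map_add_eq_mul]
    simp
  have h2 : (starRingEnd ℂ) (ZMod.stdAddChar x) * ZMod.stdAddChar x = 1 := by
    rw [ZMod.stdAddChar_apply, Complex.conj_mul']
    have h3 : ‖(ZMod.toCircle x : ℂ)‖ = 1 := Circle.norm_coe _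
    rw [h3]
    norm_num
  exact (eq_inv_of_mul_eq_one_left h2).trans (eq_inv_of_mul_eq_one_right h1).symm

lemma dft_real_conj {f : ZMod N → ℝ} (l : ZMod N) :
    ZMod.dft (fun k => ((f k : ℝ) : ℂ)) (-l)
      = (starRingEnd ℂ) (ZMod.dft (fun k => ((f k : ℝ) : ℂ)) l) := by
  simp only [ZMod.dft_apply, smul_eq_mul, map_sum, _root_.map_mul, conj_stdAddChar,
    Complex.conj_ofReal, mul_neg, neg_neg]

/-- slice-wise DFT of a real tensor -/
def tft {a b : ℕ} (T : Fin a → Fin b → ZMod N → ℝ) (l : ZMod N) : Matrix (Fin a) (Fin b) ℂ :=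
  Matrix.of fun i j => ZMod.dft (fun k => ((T i j k : ℝ) : ℂ)) l

lemma tft_inj {a b : ℕ} {A B : Fin a → Fin b → ZMod N → ℝ} (h : tft A = tft B) : A = B := by
  funext i j
  have h1 : (fun k => ((A i j k : ℝ) : ℂ)) = fun k => ((B i j k : ℝ) : ℂ) := by
    apply ZMod.dft.injective
    funext l
    have := congrArg (fun X => X l i j) h
    simpa [tft] using this
  funext k
  exact_mod_cast congrFun h1 k

lemma dft_conv (f g : ZMod N → ℂ) (l : ZMod N) :
    ZMod.dft (fun k => ∑ j : ZMod N, f j * g (k - j)) l = ZMod.dft f l * ZMod.dft g l := by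
  have rhs : ZMod.dft f l * ZMod.dft g l
      = ∑ j : ZMod N, ∑ m : ZMod N,
          ZMod.stdAddChar (-(j * l)) * ZMod.stdAddChar (-(m * l)) * (f j * g m) := by
    simp only [ZMod.dft_apply, smul_eq_mul, Finset.sum_mul_sum]
    exact Finset.sum_congr rfl fun j _ => Finset.sum_congr rfl fun m _ => by ring
  have lhs : ZMod.dft (fun k => ∑ j : ZMod N, f j * g (k - j)) l
      = ∑ k : ZMod N, ∑ j : ZMod N, ZMod.stdAddChar (-(k * l)) * (f j * g (k - j)) := by
    simp only [ZMod.dft_apply, smul_eq_mul, Finset.mul_sum]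
  rw [lhs, rhs, Finset.sum_comm]
  refine Finset.sum_congr rfl fun j _ => ?_
  rw [← Fintype.sum_equiv (Equiv.addLeft j)
    (fun m => ZMod.stdAddChar (-((j + m) * l)) * (f j * g (j + m - j)))
    (fun k => ZMod.stdAddChar (-(k * l)) * (f j * g (k - j))) (fun m => rfl)]
  refine Finset.sum_congr rfl fun m _ => ?_
  rw [add_sub_cancel_left, add_mul, neg_add, AddChar.map_add_eq_mul]

lemma tft_tProd {a b c : ℕ} (A : Fin a → Fin b → ZMod N → ℝ) (B : Fin b → Fin c → ZMod N → ℝ)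
    (l : ZMod N) : tft (tProd3 A B) l = tft A l * tft B l := by
  ext i j
  show ZMod.dft (fun k => ((tProd3 A B i j k : ℝ) : ℂ)) l = ∑ x, tft A l i x * tft B l x j
  have e1 : (fun k => ((tProd3 A B i j k : ℝ) : ℂ))
      = ∑ x : Fin b, (fun k => ∑ jj : ZMod N, ((A i x jj : ℝ) : ℂ) * ((B x j (k - jj) : ℝ) : ℂ)) := by
    funext k
    rw [Finset.sum_apply]
    simp only [tProd3, cconv]
    push_cast
    rfl
  rw [e1, map_sum, Finset.sum_apply]
  refine Finset.sum_congr rfl fun x _ => ?_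
  have h := dft_conv (fun t => ((A i x t : ℝ) : ℂ)) (fun t => ((B x j t : ℝ) : ℂ)) l
  exact h

lemma tft_conj {a b : ℕ} (A : Fin a → Fin b → ZMod N → ℝ) (l : ZMod N) :
    tft A (-l) = mconj (tft A l) := by
  ext i j
  exact dft_real_conj l

lemma tft_ttrans {a b : ℕ} (A : Fin a → Fin b → ZMod N → ℝ) (l : ZMod N) :
    tft (ttrans A) l = (tft A l)ᴴ := by
  ext j i
  show ZMod.dft (fun k => ((A i j (-k) : ℝ) : ℂ)) l = star (tft A l i j)
  have h := congrFun (ZMod.dft_comp_neg (fun k => ((A i j k : ℝ) : ℂ))) l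
  rw [h, dft_real_conj]
  rfl

lemma tft_tid {n : ℕ} (l : ZMod N) : tft (tid (n := n) (n3 := N)) l = 1 := by
  ext i j
  show ZMod.dft (fun k => ((tid i j k : ℝ) : ℂ)) l = (1 : Matrix (Fin n) (Fin n) ℂ) i j
  by_cases h : i = j
  · subst h
    have e : (fun k => ((tid (n3 := N) i i k : ℝ) : ℂ)) = fun k => if k = 0 then 1 else 0 := by
      funext k
      by_cases hk : k = 0 <;> simp [tid, hk]
    rw [e]
    simp [ZMod.dft_apply, Matrix.one_apply]
  · have e : (fun k => ((tid (n3 := N) i j k : ℝ) : ℂ)) = fun _ => 0 := by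
      funext k
      simp [tid, h]
    rw [e]
    simp [ZMod.dft_apply, Matrix.one_apply, h]

/-- inverse transform, real part -/
def invT {a b : ℕ} (g : ZMod N → Matrix (Fin a) (Fin b) ℂ) : Fin a → Fin b → ZMod N → ℝ :=
  fun i j k => (ZMod.dft.symm (fun l => g l i j) k).re

lemma tft_invT {a b : ℕ} (g : ZMod N → Matrix (Fin a) (Fin b) ℂ)
    (hg : ∀ l, g (-l) = mconj (g l)) : tft (invT g) = g := by
  funext l
  ext i j
  show ZMod.dft (fun k => (((ZMod.dft.symm (fun l' => g l' i j) k).re : ℝ) : ℂ)) l = g l i j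
  have hreal : ∀ k, (((ZMod.dft.symm (fun l' => g l' i j) k).re : ℝ) : ℂ)
      = ZMod.dft.symm (fun l' => g l' i j) k := by
    intro k
    refine Complex.conj_eq_iff_re.mp ?_
    rw [ZMod.invDFT_apply]
    simp only [smul_eq_mul, _root_.map_mul, map_sum, map_inv₀, Complex.conj_natCast,
      conj_stdAddChar]
    congr 1
    have e2 : ∀ j' : ZMod N, (starRingEnd ℂ) (g j' i j) = g (-j') i j := by
      intro j'
      rw [hg j']
      rfl
    simp only [e2]
    exact Fintype.sum_equiv (Equiv.neg (ZMod N))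
      (fun j' => ZMod.stdAddChar (-(j' * k)) * g (-j') i j)
      (fun j' => ZMod.stdAddChar (j' * k) * g j' i j)
      (fun j' => by simp [neg_mul])
  have e : (fun k => (((ZMod.dft.symm (fun l' => g l' i j) k).re : ℝ) : ℂ))
      = ZMod.dft.symm (fun l' => g l' i j) := funext hreal
  rw [e, LinearEquiv.apply_symm_apply]

end DFT

/-- every third-order real tensor admits a t-SVD. -/
theorem tsvd_exists {n1 n2 n3 : ℕ} [NeZero n3] (T : Fin n1 → Fin n2 → ZMod n3 → ℝ) :
    ∃ (U : Fin n1 → Fin n1 → ZMod n3 → ℝ) (S : Fin n1 → Fin n2 → ZMod n3 → ℝ)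
      (V : Fin n2 → Fin n2 → ZMod n3 → ℝ),
      IsOrthT U ∧ IsOrthT V ∧ fDiag S ∧ T = tProd3 (tProd3 U S) (ttrans V) := by
  obtain ⟨t, hgood, hsymt⟩ := family_svd (tft T) (fun l => tft_conj T l)
  set gU : ZMod n3 → Matrix (Fin n1) (Fin n1) ℂ := fun l => (t l).1 with hgU
  set gS : ZMod n3 → Matrix (Fin n1) (Fin n2) ℂ := fun l => (t l).2.1 with hgS
  set gV : ZMod n3 → Matrix (Fin n2) (Fin n2) ℂ := fun l => (t l).2.2 with hgV
  have hUsym : ∀ l, gU (-l) = mconj (gU l) := fun l => congrArg Prod.fst (hsymt l)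
  have hSsym : ∀ l, gS (-l) = mconj (gS l) := fun l => congrArg (fun p => p.2.1) (hsymt l)
  have hVsym : ∀ l, gV (-l) = mconj (gV l) := fun l => congrArg (fun p => p.2.2) (hsymt l)
  have hftU : tft (invT gU) = gU := tft_invT gU hUsym
  have hftS : tft (invT gS) = gS := tft_invT gS hSsym
  have hftV : tft (invT gV) = gV := tft_invT gV hVsym
  refine ⟨invT gU, invT gS, invT gV, ⟨?_, ?_⟩, ⟨?_, ?_⟩, ?_, ?_⟩
  · apply tft_inj
    funext l
    rw [tft_tProd, tft_ttrans, hftU, tft_tid]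
    exact (hgood l).1
  · apply tft_inj
    funext l
    rw [tft_tProd, tft_ttrans, hftU, tft_tid]
    exact (hgood l).2.1
  · apply tft_inj
    funext l
    rw [tft_tProd, tft_ttrans, hftV, tft_tid]
    exact (hgood l).2.2.1
  · apply tft_inj
    funext l
    rw [tft_tProd, tft_ttrans, hftV, tft_tid]
    exact (hgood l).2.2.2.1
  · intro i j k hij
    show (ZMod.dft.symm (fun l => gS l i j) k).re = 0
    have e : (fun l => gS l i j) = (0 : ZMod n3 → ℂ) := by
      funext l
      exact (hgood l).2.2.2.2.1 i j hij
    rw [e, map_zero]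
    simp
  · apply tft_inj
    funext l
    rw [tft_tProd, tft_tProd, tft_ttrans, hftU, hftS, hftV]
    exact (hgood l).2.2.2.2.2
end
end
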